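/- Let D be the n×n matrix with D[i,j] = |i - j| (the distance matrix of the path 1—2—...—n), and let D^L be its distance Laplacian: (D^L)_{ij} = -|i-j| for i ≠ j and (D^L)_{ii} = ∑_j |i-j|. Then the largest eigenvalue λ_n of D^L is simple. -/

import Mathlib

open Matrix Finset

/-- The (n)×(n+1) difference matrix: `S i i = -1`, `S i (i+1) = 1`, else `0`. -/
noncomputable def Smat (n : ℕ) : Matrix (Fin n) (Fin (n + 1)) ℝ :=
  Matrix.of fun i j => if (j : ℕ) = (i : ℕ) then -1 else if (j : ℕ) = (i : ℕ) + 1 then 1 else 0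

/-- The (n+1)×n cumulative-sum matrix: `T i j = 1` iff `j < i`. -/
noncomputable def Tmat (n : ℕ) : Matrix (Fin (n + 1)) (Fin n) ℝ :=
  Matrix.of fun i j => if (j : ℕ) < (i : ℕ) then 1 else 0

/-- The Laplacian associated with a symmetric matrix `A`:
off-diagonal entries `-A i j`, diagonal entry `∑_{k ≠ i} A i k`. -/
noncomputable def lap {m : Type*} [Fintype m] [DecidableEq m] (A : Matrix m m ℝ) :
    Matrix m m ℝ :=
  Matrix.of fun i j => if i = j then ∑ k ∈ Finset.univ.filter (fun k => k ≠ i), A i k else -A i j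

namespace PathAux

noncomputable def Dmat (n : ℕ) : Matrix (Fin (n+1)) (Fin (n+1)) ℝ :=
  Matrix.of fun i j => |(i:ℝ) - (j:ℝ)|

noncomputable def LP (n : ℕ) : Matrix (Fin (n+1)) (Fin (n+1)) ℝ := lap (Dmat n)

noncomputable def Rd (n : ℕ) (i : Fin (n+1)) : ℝ := ∑ j, Dmat n i j

variable {n : ℕ}

lemma Dmat_apply (i j : Fin (n+1)) : Dmat n i j = |(i:ℝ) - (j:ℝ)| := rfl

lemma Dmat_self (i : Fin (n+1)) : Dmat n i i = 0 := by simp [Dmat_apply]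

lemma Dmat_symm (i j : Fin (n+1)) : Dmat n i j = Dmat n j i := by
  simp [Dmat_apply, abs_sub_comm]

lemma Rd_nonneg (i : Fin (n+1)) : 0 ≤ Rd n i :=
  Finset.sum_nonneg fun _ _ => abs_nonneg _

lemma Rd_def (i : Fin (n+1)) : Rd n i = ∑ j, Dmat n i j := rfl

lemma Dmat_nonneg (i j : Fin (n+1)) : 0 ≤ Dmat n i j := abs_nonneg _

lemma LP_apply (i j : Fin (n+1)) :
    LP n i j = (if j = i then Rd n i else 0) - Dmat n i j := by
  by_cases h : i = j
  · subst h
    simp only [LP, lap, Matrix.of_apply, if_pos rfl, Dmat_self, sub_zero, if_pos rfl, Rd]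
    exact Finset.sum_filter_of_ne fun k _ hk => fun he => hk (by rw [he, Dmat_self])
  · simp [LP, lap, h, Ne.symm h, neg_eq_iff_eq_neg]

lemma LP_mulVec (x : Fin (n+1) → ℝ) (i : Fin (n+1)) :
    (LP n *ᵥ x) i = Rd n i * x i - ∑ j, Dmat n i j * x j := by
  simp only [mulVec, dotProduct, LP_apply, sub_mul, Finset.sum_sub_distrib]
  congr 1
  rw [Finset.sum_eq_single i]
  · simp
  · intro b _ hb; simp [hb]
  · simp

lemma LP_isHermitian : (LP n).IsHermitian := by
  refine Matrix.IsHermitian.ext fun i j => ?_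
  simp only [star_trivial, LP_apply]
  by_cases h : i = j
  · subst h; rfl
  · have h' : ¬ j = i := fun he => h he.symm
    simp only [if_neg h, if_neg h', zero_sub, Dmat_symm i j]

lemma LP_row_sum (i : Fin (n+1)) : ∑ j, LP n i j = 0 := by
  simp only [LP_apply, Finset.sum_sub_distrib, Finset.sum_ite_eq', Finset.mem_univ, if_pos]
  simp [Rd]

lemma LP_mulVec_one : LP n *ᵥ (fun _ => (1:ℝ)) = 0 := by
  funext i
  simp only [mulVec, dotProduct, mul_one, Pi.zero_apply]
  exact LP_row_sum i

lemma LP_quadform (x : Fin (n+1) → ℝ) :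
    ∑ i, ∑ j, Dmat n i j * (x i - x j)^2 = 2 * (x ⬝ᵥ (LP n *ᵥ x)) := by
  have hswap : ∑ i, ∑ j, Dmat n i j * (x j)^2 = ∑ i, ∑ j, Dmat n i j * (x i)^2 := by
    rw [Finset.sum_comm]
    exact Finset.sum_congr rfl fun a _ => Finset.sum_congr rfl fun b _ => by
      rw [Dmat_symm]
  have hA : ∑ i, ∑ j, Dmat n i j * (x i)^2 = ∑ i, Rd n i * (x i)^2 := by
    refine Finset.sum_congr rfl fun i _ => ?_
    rw [Rd_def, Finset.sum_mul]
  calc ∑ i, ∑ j, Dmat n i j * (x i - x j)^2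
      = ∑ i, ∑ j, (Dmat n i j * (x i)^2 + Dmat n i j * (x j)^2
          - 2 * (Dmat n i j * (x i * x j))) := by
        refine Finset.sum_congr rfl fun i _ => Finset.sum_congr rfl fun j _ => by ring
    _ = (∑ i, ∑ j, Dmat n i j * (x i)^2) + (∑ i, ∑ j, Dmat n i j * (x j)^2)
          - 2 * ∑ i, ∑ j, Dmat n i j * (x i * x j) := by
        simp [Finset.sum_add_distrib, Finset.sum_sub_distrib, Finset.mul_sum]
    _ = 2 * (x ⬝ᵥ (LP n *ᵥ x)) := by
        rw [hswap, hA]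
        simp only [dotProduct, LP_mulVec]
        have : ∑ i, x i * (Rd n i * x i - ∑ j, Dmat n i j * x j)
            = ∑ i, (Rd n i * (x i)^2 - ∑ j, Dmat n i j * (x i * x j)) := by
          refine Finset.sum_congr rfl fun i _ => ?_
          rw [mul_sub, Finset.mul_sum]
          congr 1
          · ring
          · exact Finset.sum_congr rfl fun j _ => by ring
        rw [this, Finset.sum_sub_distrib]
        ring

lemma LP_posSemidef : (LP n).PosSemidef := by
  refine Matrix.posSemidef_iff_dotProduct_mulVec.mpr ⟨LP_isHermitian, fun x => ?_⟩
  have h := LP_quadform (n := n) x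
  have hnn : 0 ≤ ∑ i, ∑ j, Dmat n i j * (x i - x j)^2 :=
    Finset.sum_nonneg fun i _ => Finset.sum_nonneg fun j _ =>
      mul_nonneg (Dmat_nonneg i j) (sq_nonneg _)
  simp only [star_trivial]
  linarith

lemma star_eq_transpose {m : Type*} [Fintype m] (A : Matrix m m ℝ) : star A = Aᵀ := by
  ext i j; simp [Matrix.star_apply]

lemma orth_dot {m : Type*} [Fintype m] [DecidableEq m] {A : Matrix m m ℝ}
    (h : Aᵀ * A = 1) (v : m → ℝ) : (A *ᵥ v) ⬝ᵥ (A *ᵥ v) = v ⬝ᵥ v := by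
  have hmv : A *ᵥ v = v ᵥ* Aᵀ := by rw [← Matrix.mulVec_transpose, Matrix.transpose_transpose]
  rw [Matrix.dotProduct_mulVec, hmv, Matrix.vecMul_vecMul, h, Matrix.vecMul_one]

lemma LP_pow_eq (k : ℕ) :
    LP n ^ k = ((LP_isHermitian (n := n)).eigenvectorUnitary : Matrix (Fin (n+1)) (Fin (n+1)) ℝ)
      * diagonal (fun i => (LP_isHermitian (n := n)).eigenvalues i ^ k)
      * star ((LP_isHermitian (n := n)).eigenvectorUnitary : Matrix (Fin (n+1)) (Fin (n+1)) ℝ) := by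
  set U := ((LP_isHermitian (n := n)).eigenvectorUnitary : Matrix (Fin (n+1)) (Fin (n+1)) ℝ)
  have hUU : U * star U = 1 := (Matrix.mem_unitaryGroup_iff).mp ((LP_isHermitian (n := n)).eigenvectorUnitary).2
  have hUU' : star U * U = 1 := (Matrix.mem_unitaryGroup_iff').mp ((LP_isHermitian (n := n)).eigenvectorUnitary).2
  have hofReal : (RCLike.ofReal ∘ (LP_isHermitian (n := n)).eigenvalues : Fin (n+1) → ℝ)
      = (LP_isHermitian (n := n)).eigenvalues := funext fun i => rfl
  have hspec : LP n = U * diagonal ((LP_isHermitian (n := n)).eigenvalues) * star U := by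
    have := (LP_isHermitian (n := n)).spectral_theorem
    rwa [hofReal] at this
  have e1 : ∀ (F G : Matrix (Fin (n+1)) (Fin (n+1)) ℝ),
      (U * F * star U) * (U * G * star U) = U * (F * G) * star U := by
    intro F G
    have h1 : (U * F * star U) * (U * G * star U)
        = U * (F * ((star U * U) * (G * star U))) := by
      simp only [Matrix.mul_assoc]
    rw [h1, hUU', Matrix.one_mul]
    simp only [Matrix.mul_assoc]
  induction k with
  | zero => simp [pow_zero, Matrix.diagonal_one, hUU]
  | succ k ih =>
      have key : LP n ^ (k+1) = LP n ^ k
          * (U * diagonal ((LP_isHermitian (n := n)).eigenvalues) * star U) := by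
        rw [← hspec, pow_succ]
      rw [key, ih, e1, Matrix.diagonal_mul_diagonal]
      congr 2

lemma LP_pow_dot_le (lam : ℝ)
    (hnn : ∀ i, 0 ≤ (LP_isHermitian (n := n)).eigenvalues i)
    (hle : ∀ i, (LP_isHermitian (n := n)).eigenvalues i ≤ lam)
    (k : ℕ) (c : Fin (n+1) → ℝ) :
    ((LP n ^ k) *ᵥ c) ⬝ᵥ ((LP n ^ k) *ᵥ c) ≤ lam^(2*k) * (c ⬝ᵥ c) := by
  set U := ((LP_isHermitian (n := n)).eigenvectorUnitary : Matrix (Fin (n+1)) (Fin (n+1)) ℝ)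
  have hUU : U * star U = 1 := (Matrix.mem_unitaryGroup_iff).mp ((LP_isHermitian (n := n)).eigenvectorUnitary).2
  have hUU' : star U * U = 1 := (Matrix.mem_unitaryGroup_iff').mp ((LP_isHermitian (n := n)).eigenvectorUnitary).2
  set lev := (LP_isHermitian (n := n)).eigenvalues
  set a := star U *ᵥ c with ha
  have h1 : (LP n ^ k) *ᵥ c = U *ᵥ (diagonal (fun i => lev i ^ k) *ᵥ a) := by
    rw [LP_pow_eq k, ← Matrix.mulVec_mulVec, ← Matrix.mulVec_mulVec]
  have hUorth : Uᵀ * U = 1 := by rw [← star_eq_transpose]; exact hUU'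
  have hUorth' : (star U)ᵀ * star U = 1 := by
    rw [star_eq_transpose, Matrix.transpose_transpose]; exact hUU
  rw [h1, orth_dot hUorth]
  have haa : a ⬝ᵥ a = c ⬝ᵥ c := by rw [ha, orth_dot hUorth']
  have h2 : (diagonal (fun i => lev i ^ k) *ᵥ a) ⬝ᵥ (diagonal (fun i => lev i ^ k) *ᵥ a)
      = ∑ i, (lev i ^ k)^2 * (a i)^2 := by
    simp only [dotProduct, Matrix.mulVec_diagonal]
    exact Finset.sum_congr rfl fun i _ => by ring
  rw [h2, ← haa]
  have : lam ^ (2*k) * (a ⬝ᵥ a) = ∑ i, (lam^k)^2 * (a i)^2 := by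
    simp only [dotProduct, Finset.mul_sum]
    exact Finset.sum_congr rfl fun i _ => by rw [← pow_mul, mul_comm 2 k, pow_mul]; ring
  rw [this]
  refine Finset.sum_le_sum fun i _ => ?_
  have h3 : lev i ^ k ≤ lam ^ k := pow_le_pow_left₀ (hnn i) (hle i) k
  have h4 : 0 ≤ lev i ^ k := pow_nonneg (hnn i) k
  exact mul_le_mul_of_nonneg_right (pow_le_pow_left₀ h4 h3 2) (sq_nonneg _)

noncomputable def dOp {n : ℕ} (z : Fin (n+1) → ℝ) : Fin n → ℝ :=
  fun i => z i.succ - z i.castSucc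

noncomputable def cumOp {n : ℕ} (u : Fin n → ℝ) : Fin (n+1) → ℝ :=
  fun l => ∑ j ∈ Finset.univ.filter (fun j : Fin n => (j:ℕ) < (l:ℕ)), u j

lemma cumOp_zero_fin (u : Fin n → ℝ) : cumOp u 0 = 0 := by
  simp [cumOp]

lemma cumOp_succ (u : Fin n → ℝ) (i : Fin n) :
    cumOp u i.succ = cumOp u i.castSucc + u i := by
  unfold cumOp
  have hfil : Finset.univ.filter (fun j : Fin n => (j:ℕ) < ((i.succ : Fin (n+1)):ℕ))
      = insert i (Finset.univ.filter (fun j : Fin n => (j:ℕ) < ((i.castSucc : Fin (n+1)):ℕ))) := by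
    ext j
    simp only [Finset.mem_filter, Finset.mem_univ, true_and, Finset.mem_insert,
      Fin.val_succ, Fin.coe_castSucc]
    constructor
    · intro h
      rcases Nat.lt_succ_iff_lt_or_eq.mp h with h | h
      · exact Or.inr h
      · exact Or.inl (Fin.ext h)
    · rintro (rfl | h)
      · omega
      · omega
  rw [hfil, Finset.sum_insert (by simp), add_comm]

lemma cumOp_zero : cumOp (0 : Fin n → ℝ) = 0 := by
  funext l
  simp [cumOp]

lemma dOp_cumOp (u : Fin n → ℝ) : dOp (cumOp u) = u := by
  funext i
  rw [dOp, cumOp_succ]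
  ring

lemma cumOp_dOp (z : Fin (n+1) → ℝ) (l : Fin (n+1)) :
    cumOp (dOp z) l = z l - z 0 := by
  induction l using Fin.induction with
  | zero => simp [cumOp_zero_fin]
  | succ i ih =>
      rw [cumOp_succ, ih, dOp]
      ring

noncomputable def Mop (n : ℕ) (u : Fin n → ℝ) : Fin n → ℝ := dOp (LP n *ᵥ cumOp u)

noncomputable def Ment (n : ℕ) (i j : Fin n) : ℝ :=
  ∑ l ∈ Finset.univ.filter (fun l : Fin (n+1) => (j:ℕ) < (l:ℕ)),
    (LP n i.succ l - LP n i.castSucc l)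

lemma Mop_apply (u : Fin n → ℝ) (i : Fin n) :
    Mop n u i = ∑ j, Ment n i j * u j := by
  unfold Mop dOp
  simp only [mulVec, dotProduct]
  rw [← Finset.sum_sub_distrib]
  have step1 : ∀ l : Fin (n+1),
      LP n i.succ l * cumOp u l - LP n i.castSucc l * cumOp u l
      = ∑ j : Fin n, if (j:ℕ) < (l:ℕ) then (LP n i.succ l - LP n i.castSucc l) * u j else 0 := by
    intro l
    rw [← sub_mul, cumOp, Finset.mul_sum, Finset.sum_filter]
  rw [Finset.sum_congr rfl fun l _ => step1 l, Finset.sum_comm]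
  refine Finset.sum_congr rfl fun j _ => ?_
  rw [Ment, ← Finset.sum_filter, Finset.sum_mul]

lemma Ment_row_total (i : Fin n) :
    ∑ l, (LP n i.succ l - LP n i.castSucc l) = 0 := by
  rw [Finset.sum_sub_distrib, LP_row_sum, LP_row_sum, sub_zero]

lemma Ment_ge_one (i j : Fin n) : 1 ≤ Ment n i j := by
  rcases lt_or_ge (i:ℕ) (j:ℕ) with hij | hij
  · -- case j > i : every term equals 1
    have hterm : ∀ l ∈ Finset.univ.filter (fun l : Fin (n+1) => (j:ℕ) < (l:ℕ)),
        LP n i.succ l - LP n i.castSucc l = 1 := by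
      intro l hl
      rw [Finset.mem_filter] at hl
      have hl' : (j:ℕ) < (l:ℕ) := hl.2
      have h1 : ¬ (l = i.succ) := by
        intro h; rw [h] at hl'; simp only [Fin.val_succ] at hl'; omega
      have h2 : ¬ (l = i.castSucc) := by
        intro h; rw [h] at hl'; simp only [Fin.coe_castSucc] at hl'; omega
      rw [LP_apply, LP_apply, if_neg h1, if_neg h2, Dmat_apply, Dmat_apply,
        Fin.val_succ, Fin.coe_castSucc]
      have hgt : ((i:ℕ):ℝ) + 1 ≤ ((l:ℕ):ℝ) := by
        exact_mod_cast (by omega : (i:ℕ)+1 ≤ (l:ℕ))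
      push_cast
      rw [abs_of_nonpos (by linarith), abs_of_nonpos (by linarith)]
      ring
    rw [Ment, Finset.sum_congr rfl hterm, Finset.sum_const, nsmul_eq_mul, mul_one]
    have hne : (Finset.univ.filter (fun l : Fin (n+1) => (j:ℕ) < (l:ℕ))).Nonempty := by
      refine ⟨Fin.last n, ?_⟩
      simp only [Finset.mem_filter, Finset.mem_univ, true_and, Fin.val_last]
      exact j.isLt
    exact_mod_cast Nat.one_le_cast.mpr (Finset.card_pos.mpr hne)
  · -- case j ≤ i : use the complement
    have hsplit := Finset.sum_filter_add_sum_filter_not Finset.univ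
      (fun l : Fin (n+1) => (j:ℕ) < (l:ℕ))
      (fun l => LP n i.succ l - LP n i.castSucc l)
    have htot := Ment_row_total (n := n) i
    have hterm : ∀ l ∈ Finset.univ.filter (fun l : Fin (n+1) => ¬ (j:ℕ) < (l:ℕ)),
        LP n i.succ l - LP n i.castSucc l ≤ -1 := by
      intro l hl
      rw [Finset.mem_filter] at hl
      have hl' : (l:ℕ) ≤ (j:ℕ) := by omega
      have hlei : (l:ℕ) ≤ (i:ℕ) := le_trans hl' hij
      have h1 : ¬ (l = i.succ) := by
        intro h; rw [h] at hlei; simp only [Fin.val_succ] at hlei; omega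
      rcases eq_or_lt_of_le hlei with heq | hlt
      · -- l = i.castSucc : diagonal term
        have h2 : l = i.castSucc := Fin.ext (by simpa [Fin.coe_castSucc] using heq)
        rw [LP_apply, LP_apply, if_neg h1, if_pos h2, Dmat_apply, Dmat_apply,
          Fin.val_succ, Fin.coe_castSucc]
        have hv : ((l:ℕ):ℝ) = ((i:ℕ):ℝ) := by exact_mod_cast heq
        rw [hv]
        have hRd := Rd_nonneg (n := n) (i.castSucc)
        push_cast
        rw [add_sub_cancel_left, sub_self, abs_zero, abs_one]
        linarith
      · -- l < i : both off-diagonal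
        have h2 : ¬ (l = i.castSucc) := by
          intro h; rw [h] at hlt; simp only [Fin.coe_castSucc] at hlt; omega
        rw [LP_apply, LP_apply, if_neg h1, if_neg h2, Dmat_apply, Dmat_apply,
          Fin.val_succ, Fin.coe_castSucc]
        have hgt : ((l:ℕ):ℝ) ≤ ((i:ℕ):ℝ) := by exact_mod_cast le_of_lt hlt
        push_cast
        rw [abs_of_nonneg (by linarith), abs_of_nonneg (by linarith)]
        linarith
    have hne : (Finset.univ.filter (fun l : Fin (n+1) => ¬ (j:ℕ) < (l:ℕ))).Nonempty := by
      refine ⟨⟨0, Nat.succ_pos n⟩, ?_⟩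
      simp
    have hcard : (1:ℝ) ≤ ((Finset.univ.filter
        (fun l : Fin (n+1) => ¬ (j:ℕ) < (l:ℕ))).card : ℝ) :=
      Nat.one_le_cast.mpr (Finset.card_pos.mpr hne)
    have hsum : ∑ l ∈ Finset.univ.filter (fun l : Fin (n+1) => ¬ (j:ℕ) < (l:ℕ)),
        (LP n i.succ l - LP n i.castSucc l) ≤ -1 := by
      calc ∑ l ∈ Finset.univ.filter (fun l : Fin (n+1) => ¬ (j:ℕ) < (l:ℕ)),
            (LP n i.succ l - LP n i.castSucc l)
          ≤ ∑ _l ∈ Finset.univ.filter (fun l : Fin (n+1) => ¬ (j:ℕ) < (l:ℕ)), (-1 : ℝ) :=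
            Finset.sum_le_sum hterm
        _ = -((Finset.univ.filter (fun l : Fin (n+1) => ¬ (j:ℕ) < (l:ℕ))).card : ℝ) := by
            rw [Finset.sum_const, nsmul_eq_mul]; ring
        _ ≤ -1 := by linarith
    rw [Ment]
    linarith

lemma Ment_nonneg (i j : Fin n) : 0 ≤ Ment n i j :=
  le_trans zero_le_one (Ment_ge_one i j)

lemma cumOp_dOp_fun (z : Fin (n+1) → ℝ) :
    cumOp (dOp z) = z - (z 0) • (fun _ => (1:ℝ)) := by
  funext l
  simp [cumOp_dOp z l]

lemma LP_mulVec_cumOp_dOp (z : Fin (n+1) → ℝ) :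
    LP n *ᵥ cumOp (dOp z) = LP n *ᵥ z := by
  rw [cumOp_dOp_fun, Matrix.mulVec_sub, Matrix.mulVec_smul, LP_mulVec_one]
  simp

lemma Mop_of_eigen {lam : ℝ} {z : Fin (n+1) → ℝ} (hz : LP n *ᵥ z = lam • z) :
    Mop n (dOp z) = lam • dOp z := by
  unfold Mop
  rw [LP_mulVec_cumOp_dOp, hz]
  funext i
  simp [dOp, mul_sub]

lemma Mop_iter (k : ℕ) (u : Fin n → ℝ) :
    (Mop n)^[k] u = dOp ((LP n ^ k) *ᵥ cumOp u) := by
  induction k with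
  | zero => simp [dOp_cumOp]
  | succ k ih =>
      rw [Function.iterate_succ_apply', ih]
      unfold Mop
      rw [LP_mulVec_cumOp_dOp, Matrix.mulVec_mulVec, ← pow_succ']

lemma Mop_mono {u v : Fin n → ℝ} (h : ∀ j, u j ≤ v j) (i : Fin n) :
    Mop n u i ≤ Mop n v i := by
  rw [Mop_apply, Mop_apply]
  exact Finset.sum_le_sum fun j _ =>
    mul_le_mul_of_nonneg_left (h j) (Ment_nonneg i j)

lemma Mop_smul (c : ℝ) (u : Fin n → ℝ) : Mop n (c • u) = c • Mop n u := by
  funext i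
  simp only [Mop_apply, Pi.smul_apply, smul_eq_mul, Finset.mul_sum]
  exact Finset.sum_congr rfl fun j _ => by ring

lemma Mop_lb {a : Fin n → ℝ} (ha : ∀ j, 0 ≤ a j) (i : Fin n) :
    (∑ j, a j) ≤ Mop n a i := by
  rw [Mop_apply]
  exact Finset.sum_le_sum fun j _ => by
    nlinarith [Ment_ge_one (n := n) i j, ha j]

lemma abs_sum_lt {m : Type*} [Fintype m] [DecidableEq m] (t : m → ℝ) (a b : m)
    (hab : a ≠ b) (ha : 0 < t a) (hb : t b < 0) : |∑ j, t j| < ∑ j, |t j| := by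
  have hbmem : b ∈ (Finset.univ : Finset m).erase a :=
    Finset.mem_erase.mpr ⟨Ne.symm hab, Finset.mem_univ b⟩
  have h1 : ∑ j, t j = t a + (t b + ∑ j ∈ ((Finset.univ).erase a).erase b, t j) := by
    rw [Finset.add_sum_erase _ _ hbmem, Finset.add_sum_erase _ _ (Finset.mem_univ a)]
  have h2 : ∑ j, |t j| = |t a| + (|t b| + ∑ j ∈ ((Finset.univ).erase a).erase b, |t j|) := by
    rw [Finset.add_sum_erase _ (fun j => |t j|) hbmem,
      Finset.add_sum_erase _ (fun j => |t j|) (Finset.mem_univ a)]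
  rw [h1, h2, ← add_assoc]
  have h3 : |t a + t b| < |t a| + |t b| := by
    rw [abs_of_pos ha, abs_of_neg hb]
    rw [abs_lt]
    constructor <;> linarith
  have h4 : |∑ j ∈ ((Finset.univ).erase a).erase b, t j|
      ≤ ∑ j ∈ ((Finset.univ).erase a).erase b, |t j| := Finset.abs_sum_le_sum_abs _ _
  calc |t a + t b + ∑ j ∈ ((Finset.univ).erase a).erase b, t j|
      ≤ |t a + t b| + |∑ j ∈ ((Finset.univ).erase a).erase b, t j| := abs_add_le _ _
    _ < |t a| + |t b| + ∑ j ∈ ((Finset.univ).erase a).erase b, |t j| := by linarith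
    _ = |t a| + (|t b| + ∑ j ∈ ((Finset.univ).erase a).erase b, |t j|) := by ring

lemma Mop_add (u v : Fin n → ℝ) : Mop n (u + v) = Mop n u + Mop n v := by
  funext i
  simp only [Mop_apply, Pi.add_apply, mul_add, Finset.sum_add_distrib]

lemma eigen_sign (hn : 1 ≤ n) (lam : ℝ) (hlam : 0 < lam)
    (hbound : ∀ (k : ℕ) (c : Fin (n+1) → ℝ),
      ((LP n ^ k) *ᵥ c) ⬝ᵥ ((LP n ^ k) *ᵥ c) ≤ lam^(2*k) * (c ⬝ᵥ c))
    (z : Fin (n+1) → ℝ) (hz0 : z ≠ 0) (hz : LP n *ᵥ z = lam • z) :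
    (∀ i, 0 < dOp z i) ∨ (∀ i, dOp z i < 0) := by
  set u : Fin n → ℝ := dOp z with hu
  -- u ≠ 0
  have hu0 : u ≠ 0 := by
    intro h
    have hconst : ∀ l, z l = z 0 := by
      intro l
      have := cumOp_dOp z l
      rw [← hu, h, cumOp_zero] at this
      have : (0:ℝ) = z l - z 0 := by rw [← this]; rfl
      linarith
    have hzf : z = (z 0) • (fun _ => (1:ℝ)) := by
      funext l; simp [hconst l]
    have : LP n *ᵥ z = 0 := by
      rw [hzf, Matrix.mulVec_smul, LP_mulVec_one, smul_zero]
    rw [hz] at this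
    rcases smul_eq_zero.mp this with h' | h'
    · exact absurd h' (ne_of_gt hlam)
    · exact hz0 h'
  have hMu : Mop n u = lam • u := Mop_of_eigen hz
  set au : Fin n → ℝ := fun j => |u j| with hau
  have hau_nonneg : ∀ j, 0 ≤ au j := fun j => abs_nonneg _
  -- positivity of ∑ au
  obtain ⟨j₀, hj₀⟩ : ∃ j, u j ≠ 0 := Function.ne_iff.mp hu0
  have hsum_pos : 0 < ∑ j, au j :=
    Finset.sum_pos' (fun j _ => hau_nonneg j)
      ⟨j₀, Finset.mem_univ j₀, abs_pos.mpr hj₀⟩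
  -- componentwise inequality
  have habs : ∀ i, lam * au i ≤ Mop n au i := by
    intro i
    have h1 : lam * au i = |lam * u i| := by
      rw [abs_mul, abs_of_pos hlam]
    have h2 : lam * u i = Mop n u i := by rw [hMu]; simp
    rw [h1, h2, Mop_apply]
    calc |∑ j, Ment n i j * u j| ≤ ∑ j, |Ment n i j * u j| :=
          Finset.abs_sum_le_sum_abs _ _
      _ = ∑ j, Ment n i j * au j := by
          refine Finset.sum_congr rfl fun j _ => ?_
          rw [abs_mul, abs_of_nonneg (Ment_nonneg i j)]
      _ = Mop n au i := (Mop_apply au i).symm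
  set w : Fin n → ℝ := fun i => Mop n au i - lam * au i with hw
  have hw_nonneg : ∀ i, 0 ≤ w i := fun i => by simp [hw]; linarith [habs i]
  -- main claim : w = 0
  have hw0 : w = 0 := by
    by_contra hwne
    obtain ⟨i₂, hi₂⟩ : ∃ i, w i ≠ 0 := Function.ne_iff.mp hwne
    have hw_pos : 0 < ∑ i, w i :=
      Finset.sum_pos' (fun i _ => hw_nonneg i)
        ⟨i₂, Finset.mem_univ i₂, lt_of_le_of_ne (hw_nonneg i₂) (Ne.symm hi₂)⟩
    set σ := ∑ i, w i with hσ
    set v' : Fin n → ℝ := Mop n au with hv'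
    have hv'_lb : ∀ i, ∑ j, au j ≤ v' i := fun i => Mop_lb hau_nonneg i
    have hv'_pos : ∀ i, 0 < v' i := fun i => lt_of_lt_of_le hsum_pos (hv'_lb i)
    have hv'_decomp : v' = lam • au + w := by
      funext i; simp [hv', hw]
    have hMv' : ∀ i, lam * v' i + σ ≤ Mop n v' i := by
      intro i
      have h1 : Mop n v' i = lam * v' i + Mop n w i := by
        conv_lhs => rw [hv'_decomp]
        rw [Mop_add, Mop_smul]
        simp only [Pi.add_apply, Pi.smul_apply, smul_eq_mul, hv']
      rw [h1]
      have h2 : σ ≤ Mop n w i := le_trans (le_of_eq hσ) (Mop_lb hw_nonneg i)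
      linarith
    -- get a maximum of v'
    obtain ⟨i₁, _, hi₁⟩ := Finset.exists_max_image (Finset.univ : Finset (Fin n)) v'
      ⟨⟨0, hn⟩, Finset.mem_univ _⟩
    set β := v' i₁ with hβ
    have hβpos : 0 < β := hv'_pos i₁
    set ε := σ / β with hε
    have hεpos : 0 < ε := div_pos hw_pos hβpos
    have hstep : ∀ i, (lam + ε) * v' i ≤ Mop n v' i := by
      intro i
      have h1 : ε * v' i ≤ σ := by
        rw [hε, div_mul_eq_mul_div, div_le_iff₀ hβpos]
        have := hi₁ i (Finset.mem_univ i)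
        nlinarith [hw_pos, hv'_pos i]
      have := hMv' i
      nlinarith
    -- iterate
    have hiter : ∀ k, ∀ i, (lam + ε)^k * v' i ≤ (Mop n)^[k] v' i := by
      intro k
      induction k with
      | zero => intro i; simp
      | succ k ih =>
          intro i
          have h1 : ∀ j, ((lam + ε)^k • v') j ≤ (Mop n)^[k] v' j := fun j => by
            simpa using ih j
          have h2 : Mop n ((lam + ε)^k • v') i ≤ Mop n ((Mop n)^[k] v') i :=
            Mop_mono h1 i
          rw [Mop_smul] at h2
          have h3 : (lam + ε)^(k+1) * v' i = (lam + ε)^k * ((lam + ε) * v' i) := by ring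
          have h4 : (lam + ε)^k * ((lam + ε) * v' i) ≤ (lam + ε)^k * Mop n v' i :=
            mul_le_mul_of_nonneg_left (hstep i) (pow_nonneg (by linarith) k)
          rw [Function.iterate_succ_apply']
          calc (lam + ε)^(k+1) * v' i ≤ (lam + ε)^k * Mop n v' i := by linarith
            _ = ((lam + ε)^k • Mop n v') i := by simp
            _ ≤ Mop n ((Mop n)^[k] v') i := h2
    -- upper bound via spectral estimate
    set c0 : Fin (n+1) → ℝ := cumOp v' with hc0
    set C : ℝ := c0 ⬝ᵥ c0 with hC
    have hCnn : 0 ≤ C := by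
      rw [hC]; exact Finset.sum_nonneg fun l _ => mul_self_nonneg _
    have hup : ∀ k i, ((Mop n)^[k] v' i)^2 ≤ 4 * (lam^(2*k) * C) := by
      intro k i
      set h : Fin (n+1) → ℝ := (LP n ^ k) *ᵥ c0 with hh
      have h1 : (Mop n)^[k] v' i = h i.succ - h i.castSucc := by
        rw [Mop_iter]; rfl
      have hdot : ∀ a : Fin (n+1), (h a)^2 ≤ h ⬝ᵥ h := by
        intro a
        have : (h a)^2 ≤ ∑ b, (h b)^2 :=
          Finset.single_le_sum (f := fun b => (h b)^2)
            (fun b _ => sq_nonneg _) (Finset.mem_univ a)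
        calc (h a)^2 ≤ ∑ b, (h b)^2 := this
          _ = h ⬝ᵥ h := by
              simp only [dotProduct]
              exact Finset.sum_congr rfl fun b _ => (sq (h b)).symm ▸ by ring
      have h2 : h ⬝ᵥ h ≤ lam^(2*k) * C := hbound k c0
      rw [h1]
      have ha := hdot i.succ
      have hb := hdot i.castSucc
      nlinarith [sq_nonneg (h i.succ + h i.castSucc)]
    -- contradiction
    set i₀ : Fin n := ⟨0, hn⟩ with hi₀
    set m := v' i₀ with hm
    have hmpos : 0 < m := hv'_pos i₀
    have hkey : ∀ k : ℕ, ((lam + ε)^2)^k * m^2 ≤ 4 * ((lam^2)^k * C) := by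
      intro k
      have h1 := hiter k i₀
      have h2 := hup k i₀
      have h3 : ((lam + ε)^k * m)^2 ≤ ((Mop n)^[k] v' i₀)^2 := by
        have hnn : 0 ≤ (lam + ε)^k * m :=
          mul_nonneg (pow_nonneg (by linarith) k) (le_of_lt hmpos)
        exact pow_le_pow_left₀ hnn h1 2
      have h4 : ((lam + ε)^k * m)^2 = ((lam + ε)^2)^k * m^2 := by
        rw [mul_pow, ← pow_mul, mul_comm k 2, pow_mul]
      have h5 : lam^(2*k) = (lam^2)^k := by rw [← pow_mul]
      rw [h4] at h3
      rw [h5] at h2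
      linarith
    have hr : 1 < ((lam + ε)^2) / (lam^2) := by
      rw [one_lt_div (by positivity)]
      nlinarith
    obtain ⟨k, hk⟩ := pow_unbounded_of_one_lt (4 * C / m^2) hr
    have hkk := hkey k
    have hdp : ((lam + ε)^2 / lam^2)^k = ((lam+ε)^2)^k / (lam^2)^k := div_pow _ _ _
    rw [hdp, div_lt_div_iff₀ (by positivity) (by positivity)] at hk
    nlinarith
  -- now w = 0 : equality case
  have heqw : ∀ i, Mop n au i = lam * au i := by
    intro i
    have : w i = 0 := by rw [hw0]; rfl
    simp only [hw] at this
    linarith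
  have hall : ∀ i, 0 < au i := by
    intro i
    have h1 : 0 < lam * au i := by
      have := Mop_lb hau_nonneg i
      rw [heqw i] at this
      linarith
    nlinarith [hau_nonneg i]
  have hune : ∀ i, u i ≠ 0 := fun i => abs_pos.mp (hall i)
  have hnomix : ¬ (∃ a b : Fin n, 0 < u a ∧ u b < 0) := by
    rintro ⟨a, b, ha, hb⟩
    have hab : a ≠ b := by intro h; rw [h] at ha; linarith
    have t_eq : |∑ j, Ment n a j * u j| = ∑ j, |Ment n a j * u j| := by
      have h1 : |∑ j, Ment n a j * u j| = |Mop n u a| := by rw [Mop_apply]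
      have h2 : Mop n u a = lam * u a := by rw [hMu]; simp
      have h3 : ∑ j, |Ment n a j * u j| = ∑ j, Ment n a j * au j := by
        refine Finset.sum_congr rfl fun j _ => ?_
        rw [abs_mul, abs_of_nonneg (Ment_nonneg a j)]
      rw [h1, h2, abs_mul, abs_of_pos hlam, h3, ← Mop_apply, heqw]
    have t_lt : |∑ j, Ment n a j * u j| < ∑ j, |Ment n a j * u j| :=
      abs_sum_lt (fun j => Ment n a j * u j) a b hab
        (mul_pos (lt_of_lt_of_le zero_lt_one (Ment_ge_one a a)) ha)
        (mul_neg_of_pos_of_neg (lt_of_lt_of_le zero_lt_one (Ment_ge_one a b)) hb)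
    linarith
  by_cases hpos : 0 < u ⟨0, hn⟩
  · left
    intro i
    rcases lt_or_gt_of_ne (hune i) with h | h
    · exact absurd ⟨⟨0, hn⟩, i, hpos, h⟩ hnomix
    · exact h
  · right
    have hneg : u ⟨0, hn⟩ < 0 :=
      lt_of_le_of_ne (not_lt.mp hpos) (hune ⟨0, hn⟩)
    intro i
    rcases lt_or_gt_of_ne (hune i) with h | h
    · exact h
    · exact absurd ⟨i, ⟨0, hn⟩, h, hneg⟩ hnomix

end PathAux

theorem path_distLap_largest_simple (n : ℕ) (hn : 1 ≤ n)
    (D : Matrix (Fin (n + 1)) (Fin (n + 1)) ℝ)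
    (hD : ∀ i j : Fin (n + 1), D i j = |(i : ℝ) - (j : ℝ)|)
    (lam : ℝ)
    (hev : ∃ x : Fin (n + 1) → ℝ, x ≠ 0 ∧ (lap D).mulVec x = lam • x)
    (hmax : ∀ μ : ℝ, (∃ x : Fin (n + 1) → ℝ, x ≠ 0 ∧ (lap D).mulVec x = μ • x) → μ ≤ lam) :
    ∀ x y : Fin (n + 1) → ℝ, x ≠ 0 → (lap D).mulVec x = lam • x →
      (lap D).mulVec y = lam • y → ∃ c : ℝ, y = c • x := by
  have hDeq : D = PathAux.Dmat n := by
    ext i j; rw [hD]; rfl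
  subst hDeq
  have hLPd : lap (PathAux.Dmat n) = PathAux.LP n := rfl
  rw [hLPd] at hev hmax
  intro x y hx0 hx hy
  rw [hLPd] at hx hy
  -- lam is positive
  obtain ⟨x₀, hx00, hx0e⟩ := hev
  have hx0dot : 0 < x₀ ⬝ᵥ x₀ := by
    obtain ⟨i, hi⟩ := Function.ne_iff.mp hx00
    exact Finset.sum_pos' (fun j _ => mul_self_nonneg _)
      ⟨i, Finset.mem_univ i, mul_self_pos.mpr hi⟩
  have hlam0 : 0 ≤ lam := by
    have hpsd := (PathAux.LP_posSemidef (n := n)).dotProduct_mulVec_nonneg x₀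
    rw [hx0e] at hpsd
    simp only [star_trivial, dotProduct_smul, smul_eq_mul] at hpsd
    nlinarith
  have hnn : ∀ i, 0 ≤ (PathAux.LP_isHermitian (n := n)).eigenvalues i := fun i =>
    (PathAux.LP_posSemidef (n := n)).eigenvalues_nonneg i
  have hle : ∀ i, (PathAux.LP_isHermitian (n := n)).eigenvalues i ≤ lam := by
    intro i
    refine hmax _ ⟨(PathAux.LP_isHermitian (n := n)).eigenvectorBasis i, ?_, ?_⟩
    · intro h
      refine (PathAux.LP_isHermitian (n := n)).eigenvectorBasis.orthonormal.ne_zero i ?_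
      ext j
      exact congrFun h j
    · exact (PathAux.LP_isHermitian (n := n)).mulVec_eigenvectorBasis i
  have hlampos : 0 < lam := by
    rcases eq_or_lt_of_le hlam0 with h | h
    · exfalso
      have hz : ∀ i, (PathAux.LP_isHermitian (n := n)).eigenvalues i = 0 := fun i =>
        le_antisymm (h ▸ hle i) (hnn i)
      have h0 : PathAux.LP n = 0 := by
        have h1 := PathAux.LP_pow_eq (n := n) 1
        rw [pow_one] at h1
        rw [h1]
        have h2 : (fun i => (PathAux.LP_isHermitian (n := n)).eigenvalues i ^ 1)
            = fun _ : Fin (n+1) => (0:ℝ) := by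
          funext i; rw [pow_one, hz i]
        rw [h2]
        simp
      have hne10 : (⟨1, by omega⟩ : Fin (n+1)) ≠ ⟨0, by omega⟩ := by
        simp [Fin.ext_iff]
      have hval : PathAux.LP n ⟨0, by omega⟩ ⟨1, by omega⟩ = -1 := by
        rw [PathAux.LP_apply, if_neg hne10, PathAux.Dmat_apply]
        norm_num
      rw [h0] at hval
      norm_num at hval
    · exact h
  have hbound := PathAux.LP_pow_dot_le (n := n) lam hnn hle
  have key := PathAux.eigen_sign hn lam hlampos hbound
  by_cases hy0 : y = 0
  · exact ⟨0, by rw [hy0, zero_smul]⟩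
  · have hsx := key x hx0 hx
    have hdx0 : PathAux.dOp x ⟨0, hn⟩ ≠ 0 := by
      rcases hsx with h | h
      · exact ne_of_gt (h ⟨0, hn⟩)
      · exact ne_of_lt (h ⟨0, hn⟩)
    refine ⟨PathAux.dOp y ⟨0, hn⟩ / PathAux.dOp x ⟨0, hn⟩, ?_⟩
    set c := PathAux.dOp y ⟨0, hn⟩ / PathAux.dOp x ⟨0, hn⟩ with hc
    by_contra hne
    have hz0 : y - c • x ≠ 0 := by
      intro h
      exact hne (sub_eq_zero.mp h)
    have hzev : PathAux.LP n *ᵥ (y - c • x) = lam • (y - c • x) := by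
      rw [Matrix.mulVec_sub, Matrix.mulVec_smul, hx, hy]
      funext i
      simp only [Pi.sub_apply, Pi.smul_apply, smul_eq_mul]
      ring
    have hds := key _ hz0 hzev
    have hzero : PathAux.dOp (y - c • x) ⟨0, hn⟩ = 0 := by
      have hdiff : PathAux.dOp (y - c • x) ⟨0, hn⟩
          = PathAux.dOp y ⟨0, hn⟩ - c * PathAux.dOp x ⟨0, hn⟩ := by
        simp only [PathAux.dOp, Pi.sub_apply, Pi.smul_apply, smul_eq_mul]
        ring
      rw [hdiff, hc, div_mul_cancel₀ _ hdx0, sub_self]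
    rcases hds with h | h
    · exact absurd hzero (ne_of_gt (h ⟨0, hn⟩))
    · exact absurd hzero (ne_of_lt (h ⟨0, hn⟩))
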